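/- Every S ∈ Sp(2,ℝ) admits an Euler decomposition: there exist 2×2 real matrices O₁ and O₂, each both orthogonal and symplectic, and a real number z with 0 < z ≤ 1, such that S = O₁ · diag(z, 1/z) · O₂, where diag(z, 1/z) is the diagonal matrix with entries z and 1/z. -/

import Mathlib

open Matrix

/-- The one-mode symplectic form `Ω₁ = [[0,1],[-1,0]]`. -/
def Omega1 : Matrix (Fin 2) (Fin 2) ℝ := !![0, 1; -1, 0]

lemma tr2 (a b c d : ℝ) : !![a, b; c, d]ᵀ = !![a, c; b, d] :=
  (Matrix.transposeᵣ_eq _).symm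

lemma omega_conj (A : Matrix (Fin 2) (Fin 2) ℝ) :
    A * Omega1 * Aᵀ = A.det • Omega1 := by
  rw [show A = !![A 0 0, A 0 1; A 1 0, A 1 1] from by ext i j; fin_cases i <;> fin_cases j <;> rfl]
  rw [tr2]
  ext i j
  fin_cases i <;> fin_cases j <;>
    simp [Matrix.mul_apply, Fin.sum_univ_two, Matrix.det_fin_two, Omega1] <;> ring

lemma rot_orth (c s : ℝ) (h : c^2 + s^2 = 1) :
    !![c, s; -s, c] * !![c, s; -s, c]ᵀ = 1 := by
  rw [tr2]
  ext i j
  fin_cases i <;> fin_cases j <;>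
    simp [Matrix.mul_apply, Fin.sum_univ_two, Matrix.one_apply] <;> nlinarith

lemma rot_det (c s : ℝ) (h : c^2 + s^2 = 1) :
    (!![c, s; -s, c]).det = 1 := by
  simp [Matrix.det_fin_two]; nlinarith

lemma diag2 (x y : ℝ) : Matrix.diagonal ![x, y] = !![x, 0; 0, y] := by
  ext i j; fin_cases i <;> fin_cases j <;> simp [Matrix.diagonal]

lemma rot_diag (p q r c s μ : ℝ) (hcs : c^2 + s^2 = 1)
    (h1 : c*p + s*q = μ*c) (h2 : c*q + s*r = μ*s)
    (hsum : μ * (p + r - μ) = 1) (hμ0 : μ ≠ 0) :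
    !![c, s; -s, c] * !![p, q; q, r] * !![c, s; -s, c]ᵀ
      = Matrix.diagonal ![μ, 1/μ] := by
  have h11 : s^2*p - 2*(c*s*q) + c^2*r = 1/μ := by
    have e : s^2*p - 2*(c*s*q) + c^2*r = p + r - μ := by
      linear_combination (p + r - μ) * hcs - c * h1 - s * h2
    rw [e, eq_div_iff hμ0]; linarith [hsum]
  rw [tr2, diag2]
  ext i j
  fin_cases i <;> fin_cases j <;>
    simp [Matrix.mul_apply, Fin.sum_univ_two]
  · linear_combination c*h1 + s*h2 + μ*hcs
  · linear_combination (-s)*h1 + c*h2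
  · linear_combination (-s)*h1 + c*h2
  · linear_combination h11

lemma diag_sym (p q r : ℝ) (hp : 0 < p) (hdet : p * r - q^2 = 1) :
    ∃ c s μ : ℝ, c^2 + s^2 = 1 ∧ 0 < μ ∧ μ ≤ 1 ∧
      !![c, s; -s, c] * !![p, q; q, r] * !![c, s; -s, c]ᵀ
        = Matrix.diagonal ![μ, 1/μ] := by
  have hr : 0 < r := by nlinarith
  by_cases hq : q = 0
  · subst hq
    have hpr : p * r = 1 := by linarith
    by_cases hp1 : p ≤ 1
    · refine ⟨1, 0, p, by ring, hp, hp1, rot_diag _ _ _ _ _ _ (by ring)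
        (by ring) (by ring) ?_ hp.ne'⟩
      nlinarith
    · refine ⟨0, 1, r, by ring, hr, ?_, rot_diag _ _ _ _ _ _ (by ring)
        (by ring) (by ring) ?_ hr.ne'⟩
      · nlinarith
      · nlinarith
  · obtain ⟨μ, hμpos, hμ1, hchar⟩ :
        ∃ μ : ℝ, 0 < μ ∧ μ ≤ 1 ∧ μ^2 - (p+r)*μ + 1 = 0 := by
      set t := p + r with ht
      have hd0 : 0 ≤ t^2 - 4 := by nlinarith [sq_nonneg (p - r), sq_nonneg q]
      set e := Real.sqrt (t^2 - 4) with he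
      have he2 : e^2 = t^2 - 4 := Real.sq_sqrt hd0
      have he0 : 0 ≤ e := Real.sqrt_nonneg _
      have ht0 : 0 < t := by positivity
      have helt : e < t := by nlinarith
      have ht2 : 2 ≤ t := by nlinarith
      refine ⟨(t - e)/2, by linarith, ?_, by field_simp; nlinarith⟩
      have : t - 2 ≤ e := by
        rw [he]
        nlinarith [Real.sq_sqrt hd0, Real.sqrt_nonneg (t^2 - 4)]
      linarith
    obtain ⟨n, hn0, hn2⟩ : ∃ n : ℝ, n ≠ 0 ∧ n^2 = q^2 + (μ - p)^2 := by
      refine ⟨Real.sqrt (q^2 + (μ - p)^2), ?_, Real.sq_sqrt (by positivity)⟩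
      intro h
      have h2 := Real.sq_sqrt (show (0:ℝ) ≤ q^2 + (μ - p)^2 by positivity)
      rw [h] at h2
      exact hq (by nlinarith)
    refine ⟨q/n, (μ - p)/n, μ, ?_, hμpos, hμ1,
      rot_diag _ _ _ _ _ _ ?_ ?_ ?_ ?_ hμpos.ne'⟩
    · field_simp; linear_combination -hn2
    · field_simp; linear_combination -hn2
    · field_simp; ring
    · field_simp; linear_combination -hchar - hdet
    · linear_combination -hchar

/-- **Euler decomposition.** Every `S ∈ Sp(2,ℝ)` can be written as
`S = O₁ · diag(z, 1/z) · O₂` with `O₁, O₂` orthogonal symplectic and `0 < z ≤ 1`. -/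
theorem euler_decomposition (S : Matrix (Fin 2) (Fin 2) ℝ)
    (hS : S * Omega1 * Sᵀ = Omega1) :
    ∃ (O₁ O₂ : Matrix (Fin 2) (Fin 2) ℝ) (z : ℝ),
      O₁ * O₁ᵀ = 1 ∧ O₁ * Omega1 * O₁ᵀ = Omega1 ∧
      O₂ * O₂ᵀ = 1 ∧ O₂ * Omega1 * O₂ᵀ = Omega1 ∧
      0 < z ∧ z ≤ 1 ∧ S = O₁ * Matrix.diagonal ![z, 1/z] * O₂ := by
  have hdetS : S.det = 1 := by
    have h := omega_conj S
    rw [hS] at h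
    have h01 := congrFun (congrFun h 0) 1
    simpa [Omega1] using h01.symm
  have hdet2 : S 0 0 * S 1 1 - S 0 1 * S 1 0 = 1 := by
    rw [Matrix.det_fin_two] at hdetS; linarith
  have hp : 0 < (S 0 0)^2 + (S 1 0)^2 := by
    nlinarith [sq_nonneg (S 0 0 * S 0 1 + S 1 0 * S 1 1), sq_nonneg (S 0 1),
      sq_nonneg (S 1 1), sq_nonneg (S 0 0), sq_nonneg (S 1 0),
      sq_nonneg (S 0 0 * S 1 1 - S 0 1 * S 1 0)]
  have hpr : ((S 0 0)^2 + (S 1 0)^2) * ((S 0 1)^2 + (S 1 1)^2)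
      - (S 0 0 * S 0 1 + S 1 0 * S 1 1)^2 = 1 := by
    nlinarith [hdet2]
  obtain ⟨c, s, μ, hcs, hμpos, hμ1, hrot⟩ :=
    diag_sym ((S 0 0)^2 + (S 1 0)^2) (S 0 0 * S 0 1 + S 1 0 * S 1 1)
      ((S 0 1)^2 + (S 1 1)^2) hp hpr
  have hSS : Sᵀ * S = !![(S 0 0)^2 + (S 1 0)^2, S 0 0 * S 0 1 + S 1 0 * S 1 1;
      S 0 0 * S 0 1 + S 1 0 * S 1 1, (S 0 1)^2 + (S 1 1)^2] := by
    ext i j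
    fin_cases i <;> fin_cases j <;>
      simp [Matrix.mul_apply, Matrix.transpose_apply, Fin.sum_univ_two] <;> ring
  set z := Real.sqrt μ with hzdef
  have hz : 0 < z := Real.sqrt_pos.mpr hμpos
  have hz1 : z ≤ 1 := by
    rw [hzdef]
    calc Real.sqrt μ ≤ Real.sqrt 1 := Real.sqrt_le_sqrt hμ1
    _ = 1 := Real.sqrt_one
  have hz2 : z^2 = μ := Real.sq_sqrt hμpos.le
  set T : Matrix (Fin 2) (Fin 2) ℝ := !![c, s; -s, c] with hT
  set N : Matrix (Fin 2) (Fin 2) ℝ := !![1/z, 0; 0, z] with hN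
  set D : Matrix (Fin 2) (Fin 2) ℝ := !![z, 0; 0, 1/z] with hD
  have hTT : T * Tᵀ = 1 := rot_orth c s hcs
  have hTT' : Tᵀ * T = 1 := mul_eq_one_comm.mp hTT
  have hNt : Nᵀ = N := by rw [hN, tr2]
  have hND : N * D = 1 := by
    rw [hN, hD]
    ext i j
    fin_cases i <;> fin_cases j <;>
      simp [Matrix.mul_apply, Fin.sum_univ_two, Matrix.one_apply] <;> field_simp
  have hNdN : N * Matrix.diagonal ![μ, 1/μ] * N = 1 := by
    rw [hN, diag2]
    ext i j
    fin_cases i <;> fin_cases j <;>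
      simp [Matrix.mul_apply, Fin.sum_univ_two, Matrix.one_apply]
    · field_simp; nlinarith [hz2]
    · field_simp; nlinarith [hz2]
  set O₁ := S * Tᵀ * N with hO₁
  have hO1tO1 : O₁ᵀ * O₁ = 1 := by
    have e : O₁ᵀ * O₁ = N * (T * (Sᵀ * S) * Tᵀ) * N := by
      rw [hO₁]
      simp only [Matrix.transpose_mul, Matrix.transpose_transpose, hNt]
      noncomm_ring
    rw [e, hSS, hrot, hNdN]
  have hO1O1t : O₁ * O₁ᵀ = 1 := mul_eq_one_comm.mpr hO1tO1
  have hdetT : T.det = 1 := rot_det c s hcs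
  have hdetO1 : O₁.det = 1 := by
    rw [hO₁, Matrix.det_mul, Matrix.det_mul, Matrix.det_transpose, hdetS, hdetT, hN,
      Matrix.det_fin_two_of]
    field_simp
    norm_num
  refine ⟨O₁, T, z, hO1O1t, ?_, hTT, ?_, hz, hz1, ?_⟩
  · rw [omega_conj, hdetO1, one_smul]
  · rw [omega_conj, hdetT, one_smul]
  · rw [show Matrix.diagonal ![z, 1/z] = D from by rw [hD, diag2]]
    have e : O₁ * D * T = S * Tᵀ * (N * D) * T := by rw [hO₁]; noncomm_ring
    rw [e, hND, Matrix.mul_one, Matrix.mul_assoc, hTT', Matrix.mul_one]
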